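/- Let n ≥ 3 and let A be the (3n+1) × 3n integer matrix of the linear system from the Möbius ladder M_n: rows indexed by the n cycles in C_4, the 2n cycles in C_+, and γ; columns indexed by the 2n rim edges e_k and n rungs r_l; entry 1 if the edge lies in the cycle, else 0. Then for d ≠ 0, the vector b ∈ ℤ^{3n+1} with entry −d at the C_4-row of the cycle containing e_0 and e_n, entry d at the γ-row, and 0 elsewhere, does not lie in the image of A over ℚ (hence not over ℤ). -/

import Mathlib

/-- Edges of the Möbius ladder `M n`: `Sum.inl k` is the rim edge `e_k` from `k` to
`k+1` (for `k ∈ ℤ/2n`), and `Sum.inr l` is the rung `r_l` joining the two vertices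
with residue `l` mod `n` (for `l ∈ ℤ/n`). -/
abbrev MobiusEdge (n : ℕ) : Type := ZMod (2 * n) ⊕ ZMod n

/-- Source map of the Möbius ladder `M n` (vertex set `ℤ/2n`). -/
def mobiusSrc (n : ℕ) : MobiusEdge n → ZMod (2 * n)
  | Sum.inl k => k
  | Sum.inr l => (l.val : ZMod (2 * n))

/-- Target map of the Möbius ladder `M n`. -/
def mobiusTgt (n : ℕ) : MobiusEdge n → ZMod (2 * n)
  | Sum.inl k => k + 1
  | Sum.inr l => (l.val : ZMod (2 * n)) + (n : ZMod (2 * n))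

/-- Membership in the 4-cycle `{e_l, e_{l+n}, r_l, r_{l+1}}` of `M n`, for `l ∈ ℤ/n`. -/
def memC4 (n : ℕ) (l : ZMod n) : MobiusEdge n → Prop
  | Sum.inl k => k = (l.val : ZMod (2 * n)) ∨ k = (l.val : ZMod (2 * n)) + (n : ZMod (2 * n))
  | Sum.inr m => m = l ∨ m = l + 1

/-- Membership in the `(n+1)`-cycle `{r_k, e_k, e_{k+1}, …, e_{k+n−1}}` of `M n`,
for `k ∈ ℤ/2n` (the rung is `r_{k mod n}`). -/
def memCplus (n : ℕ) (k : ZMod (2 * n)) : MobiusEdge n → Prop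
  | Sum.inl m => ∃ j : Fin n, m = k + ((j : ℕ) : ZMod (2 * n))
  | Sum.inr l => l = (k.val : ZMod n)

/-- Membership in the `2n`-cycle `γ = {e_0, …, e_{2n−1}}` consisting of all rim edges. -/
def memGamma (n : ℕ) : MobiusEdge n → Prop
  | Sum.inl _ => True
  | Sum.inr _ => False

/-- Index set for the collection `C = C₄ ∪ C₊ ∪ {γ}` of cycles of `M n`. -/
abbrev MobiusCyc (n : ℕ) : Type := ZMod n ⊕ ZMod (2 * n) ⊕ Unit

/-- Membership of an edge in a cycle of the collection `C = C₄ ∪ C₊ ∪ {γ}`. -/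
def memMobiusCyc (n : ℕ) : MobiusCyc n → MobiusEdge n → Prop
  | Sum.inl l => memC4 n l
  | Sum.inr (Sum.inl k) => memCplus n k
  | Sum.inr (Sum.inr _) => memGamma n

open Classical in
/-- The map `C* : ℤ^{E(M n)} → ℤ^C` sending each edge to the sum of the cycles in
`C = C₄ ∪ C₊ ∪ {γ}` containing it. -/
noncomputable def mobiusCycleMap (n : ℕ) [NeZero n] [NeZero (2 * n)]
    (x : MobiusEdge n → ℤ) : MobiusCyc n → ℤ :=
  fun i => ∑ e : MobiusEdge n, if memMobiusCyc n i e then x e else 0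

open Classical in
/-- The rational incidence system of the Möbius ladder: `A` acting on `ℚ^{E(M n)}`,
rows indexed by the cycles of `C = C₄ ∪ C₊ ∪ {γ}`, entry `1` if the edge lies in
the cycle and `0` otherwise. -/
noncomputable def mobiusCycleMapQ (n : ℕ) [NeZero n] [NeZero (2 * n)]
    (x : MobiusEdge n → ℚ) : MobiusCyc n → ℚ :=
  fun i => ∑ e : MobiusEdge n, if memMobiusCyc n i e then x e else 0

/-- For `n ≥ 3` and `d ≠ 0`, the vector with entry `−d` at the `C₄`-row of the
4-cycle containing `e_0` and `e_n` (the 4-cycle indexed by `l = 0`), entry `d` at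
the `γ`-row, and `0` elsewhere is not in the image of the incidence matrix over `ℚ`
(hence not over `ℤ`). -/


lemma lemA (n : ℕ) [NeZero n] [NeZero (2*n)] (k : ZMod (2*n)) (l : ZMod n) :
    memC4 n l (Sum.inl k) ↔ l = (k.val : ZMod n) := by
  have hlv : l.val < n := ZMod.val_lt l
  have hkv : k.val < 2 * n := ZMod.val_lt k
  have hk : ((k.val : ℕ) : ZMod (2*n)) = k := by
    rw [ZMod.natCast_val, ZMod.cast_id]
  have hvaln : (k.val : ZMod n).val = k.val % n := ZMod.val_natCast _ _
  constructor
  · rintro (h | h)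
    · have : k.val = l.val := by rw [h, ZMod.val_cast_of_lt (by omega)]
      rw [this, ZMod.natCast_val, ZMod.cast_id]
    · have : k.val = l.val + n := by
        rw [h, ← Nat.cast_add, ZMod.val_cast_of_lt (by omega)]
      rw [this]
      push_cast
      simp
  · rintro rfl
    by_cases h : k.val < n
    · left
      rw [hvaln, Nat.mod_eq_of_lt h, hk]
    · right
      have h1 : k.val % n = k.val - n := by
        rw [Nat.mod_eq_sub_mod (by omega)]; exact Nat.mod_eq_of_lt (by omega)
      have h2 : (k.val - n) + n = k.val := by omega
      rw [hvaln, h1, ← Nat.cast_add, h2, hk]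

lemma lemB (n : ℕ) [NeZero n] [NeZero (2*n)] (k : ZMod (2*n)) (m : ZMod (2*n)) :
    memCplus n m (Sum.inl k) ↔
      m ∈ Finset.image (fun j : Fin n => k - ((j : ℕ) : ZMod (2*n))) Finset.univ := by
  simp only [memCplus, Finset.mem_image, Finset.mem_univ, true_and]
  constructor
  · rintro ⟨j, hj⟩; exact ⟨j, by rw [hj]; ring⟩
  · rintro ⟨j, hj⟩; exact ⟨j, by rw [← hj]; ring⟩

lemma lemBcard (n : ℕ) [NeZero n] [NeZero (2*n)] (k : ZMod (2*n)) :
    (Finset.image (fun j : Fin n => k - ((j : ℕ) : ZMod (2*n))) Finset.univ).card = n := by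
  rw [Finset.card_image_of_injective _ ?_, Finset.card_univ, Fintype.card_fin]
  intro a b hab
  have h1 : ((a : ℕ) : ZMod (2*n)) = ((b : ℕ) : ZMod (2*n)) := by
    have := sub_right_injective hab; exact this
  have := congrArg ZMod.val h1
  rw [ZMod.val_cast_of_lt (by omega), ZMod.val_cast_of_lt (by omega)] at this
  exact Fin.ext this

lemma lemC (n : ℕ) [NeZero n] [NeZero (2*n)] (l : ZMod n) (m : ZMod (2*n)) :
    memCplus n m (Sum.inr l) ↔
      m ∈ ({(l.val : ZMod (2*n)), ((l.val + n : ℕ) : ZMod (2*n))} : Finset (ZMod (2*n))) := by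
  have hlv : l.val < n := ZMod.val_lt l
  have hmv : m.val < 2 * n := ZMod.val_lt m
  have hm : ((m.val : ℕ) : ZMod (2*n)) = m := by rw [ZMod.natCast_val, ZMod.cast_id]
  simp only [memCplus, Finset.mem_insert, Finset.mem_singleton]
  constructor
  · intro h
    have hval : (m.val : ZMod n).val = m.val % n := ZMod.val_natCast _ _
    have hl : l.val = m.val % n := by rw [h, hval]
    by_cases hc : m.val < n
    · have hmn : m.val % n = m.val := Nat.mod_eq_of_lt hc
      have hv : m.val = l.val := by omega
      left; rw [← hm, hv]
    · have hmn : m.val % n = m.val - n := by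
        rw [Nat.mod_eq_sub_mod (by omega)]; exact Nat.mod_eq_of_lt (by omega)
      have hv : m.val = l.val + n := by omega
      right; rw [← hm, hv]
  · rintro (rfl | rfl)
    · rw [ZMod.val_cast_of_lt (by omega), ZMod.natCast_val, ZMod.cast_id]
    · rw [ZMod.val_cast_of_lt (by omega)]
      push_cast
      simp

lemma lemCcard (n : ℕ) [NeZero n] [NeZero (2*n)] (l : ZMod n) :
    ({(l.val : ZMod (2*n)), ((l.val + n : ℕ) : ZMod (2*n))} : Finset (ZMod (2*n))).card = 2 := by
  have hlv : l.val < n := ZMod.val_lt l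
  rw [Finset.card_insert_of_notMem, Finset.card_singleton]
  simp only [Finset.mem_singleton]
  intro h
  have := congrArg ZMod.val h
  rw [ZMod.val_cast_of_lt (by omega), ZMod.val_cast_of_lt (by omega)] at this
  omega

lemma lemD (n : ℕ) [NeZero n] (l l' : ZMod n) :
    memC4 n l' (Sum.inr l) ↔ l' ∈ ({l, l - 1} : Finset (ZMod n)) := by
  simp only [memC4, Finset.mem_insert, Finset.mem_singleton]
  constructor
  · rintro (rfl | h)
    · left; rfl
    · right; rw [h]; ring
  · rintro (rfl | rfl)
    · left; rfl
    · right; ring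

lemma lemDcard (n : ℕ) [NeZero n] (hn : 3 ≤ n) (l : ZMod n) :
    ({l, l - 1} : Finset (ZMod n)).card = 2 := by
  haveI : Fact (1 < n) := ⟨by omega⟩
  rw [Finset.card_insert_of_notMem, Finset.card_singleton]
  simp only [Finset.mem_singleton]
  intro h
  have : (1 : ZMod n) = 0 := by linear_combination h
  exact one_ne_zero this

noncomputable def cvec (n : ℕ) : MobiusCyc n → ℚ
  | Sum.inl _ => 1
  | Sum.inr (Sum.inl _) => -1
  | Sum.inr (Sum.inr _) => (n : ℚ) - 1

open Classical in
lemma inner_zero (n : ℕ) [NeZero n] [NeZero (2*n)] (hn : 3 ≤ n) (e : MobiusEdge n) :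
    ∑ i : MobiusCyc n, (if memMobiusCyc n i e then cvec n i else 0) = 0 := by
  rw [Fintype.sum_sum_type, Fintype.sum_sum_type]
  cases e with
  | inl k =>
    have hA : ∑ l : ZMod n, (if memMobiusCyc n (Sum.inl l) (Sum.inl k) then cvec n (Sum.inl l) else 0)
        = 1 := by
      simp only [memMobiusCyc, lemA, cvec]
      rw [Finset.sum_ite_eq' Finset.univ ((k.val : ZMod n)) (fun _ => (1:ℚ))]
      simp
    have hB : ∑ m : ZMod (2*n),
        (if memMobiusCyc n (Sum.inr (Sum.inl m)) (Sum.inl k) then cvec n (Sum.inr (Sum.inl m)) else 0)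
        = -(n : ℚ) := by
      simp only [memMobiusCyc, lemB, cvec]
      rw [Finset.sum_ite_mem, Finset.univ_inter, Finset.sum_const, lemBcard]
      simp
    have hC : ∑ u : Unit,
        (if memMobiusCyc n (Sum.inr (Sum.inr u)) (Sum.inl k) then cvec n (Sum.inr (Sum.inr u)) else 0)
        = (n : ℚ) - 1 := by
      simp [memMobiusCyc, memGamma, cvec]
    rw [hA, hB, hC]; ring
  | inr l =>
    have hA : ∑ l' : ZMod n, (if memMobiusCyc n (Sum.inl l') (Sum.inr l) then cvec n (Sum.inl l') else 0)
        = 2 := by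
      simp only [memMobiusCyc, lemD, cvec]
      rw [Finset.sum_ite_mem, Finset.univ_inter, Finset.sum_const, lemDcard n hn]
      simp
    have hB : ∑ m : ZMod (2*n),
        (if memMobiusCyc n (Sum.inr (Sum.inl m)) (Sum.inr l) then cvec n (Sum.inr (Sum.inl m)) else 0)
        = -2 := by
      simp only [memMobiusCyc, lemC, cvec]
      rw [Finset.sum_ite_mem, Finset.univ_inter, Finset.sum_const, lemCcard]
      simp
    have hC : ∑ u : Unit,
        (if memMobiusCyc n (Sum.inr (Sum.inr u)) (Sum.inr l) then cvec n (Sum.inr (Sum.inr u)) else 0)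
        = 0 := by
      simp [memMobiusCyc, memGamma]
    rw [hA, hB, hC]; ring

theorem mobius_vector_not_in_rational_image (n : ℕ) [NeZero n] [NeZero (2 * n)]
    (hn : 3 ≤ n) (d : ℚ) (hd : d ≠ 0) :
    ¬ ∃ x : MobiusEdge n → ℚ,
        mobiusCycleMapQ n x = fun i => match i with
          | Sum.inl l => if l = 0 then -d else 0
          | Sum.inr (Sum.inl _) => 0
          | Sum.inr (Sum.inr _) => d := by
  classical
  rintro ⟨x, hx⟩
  have key : ∑ i : MobiusCyc n, cvec n i * mobiusCycleMapQ n x i = 0 := by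
    unfold mobiusCycleMapQ
    have step1 : ∀ i : MobiusCyc n,
        cvec n i * (∑ e : MobiusEdge n, if memMobiusCyc n i e then x e else 0)
        = ∑ e : MobiusEdge n, (if memMobiusCyc n i e then cvec n i else 0) * x e := by
      intro i
      rw [Finset.mul_sum]
      refine Finset.sum_congr rfl fun e _ => ?_
      split <;> ring
    calc ∑ i : MobiusCyc n, cvec n i * (∑ e : MobiusEdge n, if memMobiusCyc n i e then x e else 0)
        = ∑ i : MobiusCyc n, ∑ e : MobiusEdge n, (if memMobiusCyc n i e then cvec n i else 0) * x e := by
          exact Finset.sum_congr rfl fun i _ => step1 i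
      _ = ∑ e : MobiusEdge n, ∑ i : MobiusCyc n, (if memMobiusCyc n i e then cvec n i else 0) * x e :=
          Finset.sum_comm
      _ = ∑ e : MobiusEdge n, (∑ i : MobiusCyc n, if memMobiusCyc n i e then cvec n i else 0) * x e := by
          exact Finset.sum_congr rfl fun e _ => (Finset.sum_mul ..).symm
      _ = 0 := by
          refine Finset.sum_eq_zero fun e _ => ?_
          rw [inner_zero n hn e, zero_mul]
  rw [hx] at key
  rw [Fintype.sum_sum_type, Fintype.sum_sum_type] at key
  simp only [cvec] at key
  have h1 : ∑ l : ZMod n, (1 : ℚ) * (if l = 0 then -d else 0) = -d := by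
    simp [Finset.sum_ite_eq' Finset.univ (0 : ZMod n)]
  rw [h1] at key
  simp only [mul_zero, Finset.sum_const_zero, neg_mul, one_mul] at key
  have h2 : (-d) + (0 + ∑ _u : Unit, ((n:ℚ) - 1) * d) = ((n:ℚ) - 2) * d := by
    simp; ring
  rw [h2] at key
  have hn3 : (3:ℚ) ≤ (n:ℚ) := by exact_mod_cast hn
  have : ((n:ℚ) - 2) ≠ 0 := by linarith
  exact hd (by
    have := mul_eq_zero.mp key
    tauto)
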